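/- Let ℝ act continuously on a compact metric space X, T > 0, and p ∈ X. Then the local mean dimension satisfies dim_p(X : TZ) = T · dim_p(X : ℝ). -/

import Mathlib

open Metric Filter Set
open scoped ENNReal

noncomputable section

/-- The diameter of a set with respect to an abstract distance function `d`. -/
def setDiam {X : Type*} (d : X → X → ℝ) (s : Set X) : ℝ :=
  sSup (insert 0 {r : ℝ | ∃ x ∈ s, ∃ y ∈ s, d x y = r})

/-- `P ⊆ ℝ^m` is a (finite) polyhedron of dimension at most `n`: a finite union of
simplices (convex hulls of affinely independent finite sets) each with at most `n+1` vertices. -/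
def IsPolyhedronOfDim {m : ℕ} (n : ℕ) (P : Set (EuclideanSpace ℝ (Fin m))) : Prop :=
  ∃ S : Finset (Finset (EuclideanSpace ℝ (Fin m))),
    (∀ s ∈ S, AffineIndependent ℝ (fun v : {x // x ∈ s} => (v : EuclideanSpace ℝ (Fin m))) ∧
      s.card ≤ n + 1) ∧
    P = ⋃ s ∈ S, convexHull ℝ (s : Set (EuclideanSpace ℝ (Fin m)))

/-- `Widim_ε(X, d)`: the minimal integer `n ≥ 0` such that there exist an `n`-dimensional
polyhedron `P` and a continuous map `f : X → P` all of whose fibers have `d`-diameter `≤ ε`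
(an `ε`-embedding). -/
def widim (X : Type*) [TopologicalSpace X] (d : X → X → ℝ) (ε : ℝ) : ℕ :=
  sInf {n : ℕ | ∃ (m : ℕ) (P : Set (EuclideanSpace ℝ (Fin m))) (f : X → P),
    IsPolyhedronOfDim n P ∧ Continuous f ∧ ∀ y : P, setDiam d (f ⁻¹' {y}) ≤ ε}

/-- For a right action `act` of `Γ` on `X` and `Ω ⊆ Γ`, the distance
`d_Ω(x,y) = sup_{γ ∈ Ω} d(x·γ, y·γ)`. -/
def dOmega {X Γ : Type*} (d : X → X → ℝ) (act : X → Γ → X) (Ω : Set Γ) (x y : X) : ℝ :=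
  sSup ((fun γ => d (act x γ) (act y γ)) '' Ω)
/-- The local mean dimension `dim_p(X : ℝ)` of a continuous `ℝ`-action at `p`:
`lim_{r→0} dim(B_r(p)_ℝ ⊂ X : ℝ)`, where
`dim(Y ⊂ X : ℝ) = lim_{ε→0} lim_n (sup_{s∈ℝ} Widim_ε(Y, d_{s+[0,n]}))/n`, written with
the limit in `n` as a `limsup`, the (monotone) limit in `ε` as a supremum and the
(monotone) limit in `r` as an infimum. -/
def localDimR {X : Type*} [MetricSpace X] (act : X → ℝ → X) (p : X) : ℝ≥0∞ :=
  ⨅ r > (0 : ℝ), ⨆ ε > (0 : ℝ), Filter.limsup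
    (fun n : ℕ =>
      (⨆ s : ℝ, (widim {x : X | ∀ t : ℝ, dist (act x t) (act p t) ≤ r}
        (fun u v => dOmega dist act (Set.Icc s (s + (n : ℝ))) (u : X) (v : X)) ε : ℝ≥0∞))
      / (n : ℝ≥0∞))
    Filter.atTop

/-- The local mean dimension `dim_p(X : Tℤ)` of the induced `Tℤ`-action at `p`, along the
amenable sequence `Ω'_n = {0, T, …, (n-1)T}` and its translates `kT + Ω'_n`. -/
def localDimTZ {X : Type*} [MetricSpace X] (act : X → ℝ → X) (T : ℝ) (p : X) : ℝ≥0∞ :=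
  ⨅ r > (0 : ℝ), ⨆ ε > (0 : ℝ), Filter.limsup
    (fun n : ℕ =>
      (⨆ k : ℤ, (widim {x : X | ∀ j : ℤ, dist (act x ((j : ℝ) * T)) (act p ((j : ℝ) * T)) ≤ r}
        (fun u v => dOmega dist act
          {t : ℝ | ∃ m : ℕ, m < n ∧ t = (k : ℝ) * T + (m : ℝ) * T} (u : X) (v : X)) ε : ℝ≥0∞))
      / (n : ℝ≥0∞))
    Filter.atTop

-- AUX
def wset (X : Type*) [TopologicalSpace X] (d : X → X → ℝ) (ε : ℝ) : Set ℕ :=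
  {n : ℕ | ∃ (m : ℕ) (P : Set (EuclideanSpace ℝ (Fin m))) (f : X → P),
    IsPolyhedronOfDim n P ∧ Continuous f ∧ ∀ y : P, setDiam d (f ⁻¹' {y}) ≤ ε}

lemma widim_eq (X : Type*) [TopologicalSpace X] (d : X → X → ℝ) (ε : ℝ) :
    widim X d ε = sInf (wset X d ε) := rfl

lemma setDiam_le {Z : Type*} {d : Z → Z → ℝ} {s : Set Z} {ε : ℝ} (hε : 0 ≤ ε)
    (h : ∀ x ∈ s, ∀ y ∈ s, d x y ≤ ε) : setDiam d s ≤ ε := by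
  apply Real.sSup_le _ hε
  rintro r hr
  rcases hr with rfl | ⟨x, hx, y, hy, rfl⟩
  · exact hε
  · exact h x hx y hy

lemma le_setDiam {Z : Type*} {d : Z → Z → ℝ} {s : Set Z} {C : ℝ}
    (hC : ∀ x y, d x y ≤ C) {x y : Z} (hx : x ∈ s) (hy : y ∈ s) :
    d x y ≤ setDiam d s := by
  apply le_csSup
  · refine ⟨max C 0, ?_⟩
    rintro r hr
    rcases hr with rfl | ⟨a, _, b, _, rfl⟩
    · exact le_max_right _ _
    · exact le_trans (hC a b) (le_max_left _ _)
  · exact Or.inr ⟨x, hx, y, hy, rfl⟩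

lemma widim_mono {X : Type*} [TopologicalSpace X] {Y' Y : Set X} (hYY : Y' ⊆ Y)
    (d d' : X → X → ℝ) {ε δ : ℝ} (hε : 0 ≤ ε) (C : ℝ) (hC : ∀ x y, d' x y ≤ C)
    (key : ∀ x y : X, d' x y ≤ δ → d x y ≤ ε)
    (hne : (wset Y (fun u v : Y => d' u v) δ).Nonempty) :
    widim Y' (fun u v : Y' => d (u : X) (v : X)) ε
      ≤ widim Y (fun u v : Y => d' (u : X) (v : X)) δ := by
  rw [widim_eq, widim_eq]
  have htrans : sInf (wset Y (fun u v : Y => d' (u : X) (v : X)) δ)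
      ∈ wset Y' (fun u v : Y' => d (u : X) (v : X)) ε := by
    obtain ⟨m, P, f, hP, hf, hfib⟩ := Nat.sInf_mem hne
    refine ⟨m, P, fun x => f ⟨(x : X), hYY x.2⟩, hP,
      hf.comp (Continuous.subtype_mk continuous_subtype_val _), ?_⟩
    intro y
    apply setDiam_le hε
    intro u hu v hv
    simp only [Set.mem_preimage, Set.mem_singleton_iff] at hu hv
    apply key
    have h1 : (⟨(u : X), hYY u.2⟩ : Y) ∈ f ⁻¹' {y} := hu
    have h2 : (⟨(v : X), hYY v.2⟩ : Y) ∈ f ⁻¹' {y} := hv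
    calc d' (u : X) (v : X)
        ≤ setDiam (fun a b : Y => d' (a : X) (b : X)) (f ⁻¹' {y}) :=
          le_setDiam (d := fun a b : Y => d' (a : X) (b : X)) (C := C)
            (fun a b => hC (a : X) (b : X)) h1 h2
      _ ≤ δ := hfib y
  exact Nat.sInf_le htrans

lemma wset_nonempty {Y : Type*} [MetricSpace Y] [CompactSpace Y] [Nonempty Y]
    (d : Y → Y → ℝ) {ε : ℝ} (hε : 0 ≤ ε)
    (h : ∃ η > 0, ∀ u v : Y, dist u v ≤ η → d u v ≤ ε) :
    (wset Y d ε).Nonempty := by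
  classical
  obtain ⟨η, hη, hmod⟩ := h
  obtain ⟨t, ht⟩ := isCompact_univ.elim_finite_subcover (fun y : Y => ball y (η / 2))
    (fun y => isOpen_ball) (fun x _ => Set.mem_iUnion.2 ⟨x, mem_ball_self (by linarith)⟩)
  set m := t.card with hm
  set c : Fin m → Y := fun i => (t.equivFin.symm i : Y) with hc
  set g : Fin m → Y → ℝ := fun i x => max (η / 2 - dist x (c i)) 0 with hg
  have hgnn : ∀ i x, 0 ≤ g i x := fun i x => le_max_right _ _
  have hgcont : ∀ i, Continuous (g i) := fun i =>
    (continuous_const.sub (continuous_id.dist continuous_const)).max continuous_const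
  set Sg : Y → ℝ := fun x => ∑ i, g i x with hSg
  have hSpos : ∀ x, 0 < Sg x := by
    intro x
    have hx := ht (Set.mem_univ x)
    simp only [Set.mem_iUnion] at hx
    obtain ⟨y, hyt, hxy⟩ := hx
    refine Finset.sum_pos' (fun i _ => hgnn i x) ⟨t.equivFin ⟨y, hyt⟩, Finset.mem_univ _, ?_⟩
    have hcy : c (t.equivFin ⟨y, hyt⟩) = y := by simp [hc]
    rw [hg]
    dsimp only
    rw [hcy]
    exact lt_max_of_lt_left (sub_pos.2 (mem_ball.1 hxy))
  set φ : Fin m → Y → ℝ := fun i x => g i x / Sg x with hφ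
  have hφnn : ∀ i x, 0 ≤ φ i x := fun i x => div_nonneg (hgnn i x) (hSpos x).le
  have hφsum : ∀ x, ∑ i, φ i x = 1 := by
    intro x
    rw [hφ]
    dsimp only
    rw [← Finset.sum_div, div_self (hSpos x).ne']
  have hφcont : ∀ i, Continuous (φ i) := by
    intro i
    exact (hgcont i).div (by exact continuous_finset_sum _ fun j _ => hgcont j)
      (fun x => (hSpos x).ne')
  have hφpos : ∀ i x, 0 < φ i x → dist x (c i) < η / 2 := by
    intro i x hpos
    by_contra hge
    push_neg at hge
    have : g i x = 0 := by
      rw [hg]; dsimp only; rw [max_eq_right]; linarith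
    rw [hφ] at hpos; dsimp only at hpos; rw [this] at hpos
    simp at hpos
  set e : Fin m → EuclideanSpace ℝ (Fin m) := fun i => EuclideanSpace.single i 1 with he
  set F : Y → EuclideanSpace ℝ (Fin m) := fun x => ∑ i, φ i x • e i with hF
  have hFcoord : ∀ x i, F x i = φ i x := by
    intro x i
    rw [hF]
    dsimp only
    rw [WithLp.ofLp_sum, Finset.sum_apply]
    simp [he, EuclideanSpace.single_apply]
  set s₀ : Finset (EuclideanSpace ℝ (Fin m)) := Finset.image e Finset.univ with hs₀
  set P : Set (EuclideanSpace ℝ (Fin m)) := convexHull ℝ (s₀ : Set _) with hP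
  have hFP : ∀ x, F x ∈ P := by
    intro x
    exact Convex.sum_mem (convex_convexHull _ _) (fun i _ => hφnn i x) (hφsum x)
      (fun i _ => subset_convexHull _ _ (by simp [hs₀]))
  have hei : AffineIndependent ℝ e := by
    rw [affineIndependent_iff]
    intro s w hw0 hsum i hi
    have h2 : (∑ j ∈ s, w j • e j) i = (0 : EuclideanSpace ℝ (Fin m)) i := by rw [hsum]
    rw [WithLp.ofLp_sum, Finset.sum_apply] at h2
    simp only [PiLp.smul_apply, PiLp.zero_apply, Pi.smul_apply, Pi.zero_apply, he,
      EuclideanSpace.single_apply, smul_eq_mul, mul_ite, mul_one, mul_zero] at h2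
    rwa [Finset.sum_ite_eq s i w, if_pos hi] at h2
  have hinj : Function.Injective e := by
    intro i j hij
    by_contra hne
    have h2 : (EuclideanSpace.single i (1:ℝ)) i = (EuclideanSpace.single j (1:ℝ)) i :=
      congrArg (fun v => v i) hij
    rw [EuclideanSpace.single_apply, EuclideanSpace.single_apply, if_pos rfl,
      if_neg (fun hh : i = j => hne hh)] at h2
    exact one_ne_zero h2
  have hrange : (s₀ : Set (EuclideanSpace ℝ (Fin m))) = Set.range e := by
    simp [hs₀]
  have haff : AffineIndependent ℝ (fun v : {x // x ∈ s₀} => (v : EuclideanSpace ℝ (Fin m))) := by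
    have h2 : AffineIndependent ℝ (fun v : Set.range e => (v : EuclideanSpace ℝ (Fin m))) :=
      hei.range
    have hmem : ∀ v : {x // x ∈ s₀}, (v : EuclideanSpace ℝ (Fin m)) ∈ Set.range e := by
      intro v; rw [← hrange]; exact v.2
    exact h2.comp_embedding
      (⟨fun v => ⟨(v : EuclideanSpace ℝ (Fin m)), hmem v⟩,
        fun a b hab => Subtype.ext (congrArg Subtype.val hab : _)⟩ :
        {x // x ∈ s₀} ↪ Set.range e)
  have hpoly : IsPolyhedronOfDim m P := by
    refine ⟨{s₀}, ?_, by simp [hP]⟩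
    intro s hs
    rw [Finset.mem_singleton] at hs
    subst hs
    exact ⟨haff, le_trans (le_trans Finset.card_image_le (by simp)) (Nat.le_succ m)⟩
  have hFcont : Continuous F := by
    rw [hF]
    exact continuous_finset_sum _ fun i _ => (hφcont i).smul continuous_const
  refine ⟨m, m, P, fun x => ⟨F x, hFP x⟩, hpoly, hFcont.subtype_mk _, ?_⟩
  intro y
  apply setDiam_le hε
  intro u hu v hv
  simp only [Set.mem_preimage, Set.mem_singleton_iff, Subtype.ext_iff] at hu hv
  have hFuv : F u = F v := by rw [hu, hv]
  have hex : ∃ i, 0 < φ i u := by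
    by_contra h'
    push_neg at h'
    have hz : ∀ i, φ i u = 0 := fun i => le_antisymm (h' i) (hφnn i u)
    have hsum := hφsum u
    rw [Finset.sum_congr rfl (fun i _ => hz i)] at hsum
    simp at hsum
  obtain ⟨i, hi⟩ := hex
  have hiv : 0 < φ i v := by
    have : F u i = F v i := congrArg (fun w => w i) hFuv
    rw [hFcoord u i, hFcoord v i] at this
    rwa [this] at hi
  have d1 : dist (u : Y) (c i) < η / 2 := hφpos i u hi
  have d2 : dist (v : Y) (c i) < η / 2 := hφpos i v hiv
  apply hmod
  calc dist (u : Y) (v : Y) ≤ dist (u : Y) (c i) + dist (c i) (v : Y) := dist_triangle _ _ _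
    _ ≤ η := by rw [dist_comm (c i)]; linarith

section DOmega
variable {X : Type*} [MetricSpace X] [CompactSpace X]

lemma dOmega_nonneg (act : X → ℝ → X) (Ω : Set ℝ) (x y : X) :
    0 ≤ dOmega dist act Ω x y := by
  apply Real.sSup_nonneg
  rintro r ⟨γ, hγ, rfl⟩
  exact dist_nonneg

lemma dOmega_le_diam (act : X → ℝ → X) (Ω : Set ℝ) (x y : X) :
    dOmega dist act Ω x y ≤ diam (Set.univ : Set X) := by
  apply Real.sSup_le _ diam_nonneg
  rintro r ⟨γ, hγ, rfl⟩
  exact dist_le_diam_of_mem isCompact_univ.isBounded (Set.mem_univ _) (Set.mem_univ _)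

lemma le_dOmega (act : X → ℝ → X) {Ω : Set ℝ} {γ : ℝ} (hγ : γ ∈ Ω) (x y : X) :
    dist (act x γ) (act y γ) ≤ dOmega dist act Ω x y := by
  apply le_csSup
  · refine ⟨diam (Set.univ : Set X), ?_⟩
    rintro r ⟨γ', _, rfl⟩
    exact dist_le_diam_of_mem isCompact_univ.isBounded (Set.mem_univ _) (Set.mem_univ _)
  · exact ⟨γ, hγ, rfl⟩

lemma dOmega_le_of (act : X → ℝ → X) {Ω : Set ℝ} {x y : X} {a : ℝ} (ha : 0 ≤ a)
    (h : ∀ γ ∈ Ω, dist (act x γ) (act y γ) ≤ a) : dOmega dist act Ω x y ≤ a := by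
  apply Real.sSup_le _ ha
  rintro r ⟨γ, hγ, rfl⟩
  exact h γ hγ

lemma dOmega_mono (act : X → ℝ → X) {Ω Ω' : Set ℝ} (h : Ω ⊆ Ω') (x y : X) :
    dOmega dist act Ω x y ≤ dOmega dist act Ω' x y :=
  dOmega_le_of act (dOmega_nonneg act Ω' x y) (fun γ hγ => le_dOmega act (h hγ) x y)

lemma flow_uc (act : X → ℝ → X) (hcont : Continuous fun p : X × ℝ => act p.1 p.2)
    (A B : ℝ) {ε : ℝ} (hε : 0 < ε) :
    ∃ η > 0, ∀ x y : X, dist x y ≤ η → ∀ t ∈ Set.Icc A B, dist (act x t) (act y t) ≤ ε := by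
  haveI : CompactSpace (Set.Icc A B) := isCompact_iff_compactSpace.1 isCompact_Icc
  have hF : Continuous fun p : X × Set.Icc A B => act p.1 (p.2 : ℝ) :=
    hcont.comp (continuous_fst.prodMk (continuous_subtype_val.comp continuous_snd))
  have huc := CompactSpace.uniformContinuous_of_continuous hF
  rw [Metric.uniformContinuous_iff] at huc
  obtain ⟨δ, hδ, hd⟩ := huc ε hε
  refine ⟨δ / 2, by linarith, fun x y hxy t ht => ?_⟩
  have hpd : dist ((x, ⟨t, ht⟩) : X × Set.Icc A B) (y, ⟨t, ht⟩) < δ := by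
    rw [Prod.dist_eq]
    have : dist (⟨t, ht⟩ : Set.Icc A B) ⟨t, ht⟩ = 0 := dist_self _
    rw [this]
    rw [max_eq_left dist_nonneg]
    linarith
  exact (hd hpd).le

end DOmega

section ENNRealAux
open ENNReal

lemma ennreal_helper {L x : ℝ≥0∞} {c : ℝ} (hc : 0 < c)
    (h : ∀ γ : ℝ, 0 < γ → ∀ η : ℝ, 0 < η → x ≤ ENNReal.ofReal (c + γ) * (L + ENNReal.ofReal η)) :
    x ≤ ENNReal.ofReal c * L := by
  rcases eq_or_ne L ⊤ with rfl | hL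
  · rw [ENNReal.mul_top (by simp [hc] : ENNReal.ofReal c ≠ 0)]
    exact le_top
  · apply ENNReal.le_of_forall_pos_le_add
    intro ε hε _
    set Lt := L.toReal with hLtdef
    have hLt0 : 0 ≤ Lt := ENNReal.toReal_nonneg
    have hLte : L = ENNReal.ofReal Lt := (ENNReal.ofReal_toReal hL).symm
    have hεR : (0 : ℝ) < (ε : ℝ) := hε
    set γ := min 1 ((ε : ℝ) / (2 * (Lt + 1))) with hγdef
    set η := (ε : ℝ) / (2 * (c + 1)) with hηdef
    have hγ0 : 0 < γ := lt_min one_pos (by positivity)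
    have hη0 : 0 < η := by positivity
    have hkey := h γ hγ0 η hη0
    have heq : ENNReal.ofReal (c + γ) * (L + ENNReal.ofReal η)
        = ENNReal.ofReal ((c + γ) * (Lt + η)) := by
      rw [hLte, ← ENNReal.ofReal_add hLt0 hη0.le, ← ENNReal.ofReal_mul (by positivity)]
    have hreal : (c + γ) * (Lt + η) ≤ c * Lt + (ε : ℝ) := by
      have hγ1 : γ ≤ 1 := min_le_left _ _
      have hγ2 : γ ≤ (ε : ℝ) / (2 * (Lt + 1)) := min_le_right _ _
      have h1 : c * η + γ * η ≤ (c + 1) * η := by nlinarith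
      have h2 : (c + 1) * η = (ε : ℝ) / 2 := by
        rw [hηdef]; field_simp
      have h3 : γ * Lt ≤ (ε : ℝ) / 2 := by
        have : γ * Lt ≤ ((ε : ℝ) / (2 * (Lt + 1))) * Lt := by nlinarith
        have h4 : ((ε : ℝ) / (2 * (Lt + 1))) * Lt ≤ (ε : ℝ) / 2 := by
          rw [div_mul_eq_mul_div, div_le_div_iff₀ (by positivity) (by norm_num)]
          nlinarith
        linarith
      nlinarith
    calc x ≤ ENNReal.ofReal ((c + γ) * (Lt + η)) := heq ▸ hkey
      _ ≤ ENNReal.ofReal (c * Lt + (ε : ℝ)) := ENNReal.ofReal_le_ofReal hreal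
      _ = ENNReal.ofReal (c * Lt) + ENNReal.ofReal (ε : ℝ) :=
          ENNReal.ofReal_add (by positivity) hεR.le
      _ = ENNReal.ofReal c * L + ↑ε := by
          rw [ENNReal.ofReal_mul hc.le, ← hLte, ENNReal.ofReal_coe_nnreal]

lemma limsup_scale {a b : ℕ → ℝ≥0∞} {c : ℝ} (hc : 0 < c) (N : ℕ → ℕ)
    (hN : Filter.Tendsto N Filter.atTop Filter.atTop)
    (hbound : ∀ γ : ℝ, 0 < γ → ∀ᶠ n in Filter.atTop,
      a n / (n : ℝ≥0∞) ≤ ENNReal.ofReal (c + γ) * (b (N n) / (N n : ℝ≥0∞))) :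
    Filter.limsup (fun n => a n / (n : ℝ≥0∞)) Filter.atTop
      ≤ ENNReal.ofReal c * Filter.limsup (fun m => b m / (m : ℝ≥0∞)) Filter.atTop := by
  set L := Filter.limsup (fun m => b m / (m : ℝ≥0∞)) Filter.atTop with hLdef
  rcases eq_or_ne L ⊤ with hLtop | hL
  · rw [hLtop, ENNReal.mul_top (by simp [hc] : ENNReal.ofReal c ≠ 0)]
    exact le_top
  apply ennreal_helper hc
  intro γ hγ η hη
  have hηe : (0 : ℝ≥0∞) < ENNReal.ofReal η := ENNReal.ofReal_pos.2 hη
  have hlt : L < L + ENNReal.ofReal η := ENNReal.lt_add_right hL hηe.ne'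
  have hLi : L = ⨅ j, ⨆ m, ⨆ (_ : m ≥ j), b m / (m : ℝ≥0∞) := limsup_eq_iInf_iSup_of_nat
  have hlt2 : (⨅ j, ⨆ m, ⨆ (_ : m ≥ j), b m / (m : ℝ≥0∞)) < L + ENNReal.ofReal η := by
    rw [← hLi]; exact hlt
  obtain ⟨j, hj⟩ := iInf_lt_iff.1 hlt2
  have hev : ∀ᶠ n in Filter.atTop, j ≤ N n := hN.eventually_ge_atTop j
  have hfin : ∀ᶠ n in Filter.atTop,
      a n / (n : ℝ≥0∞) ≤ ENNReal.ofReal (c + γ) * (L + ENNReal.ofReal η) := by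
    filter_upwards [hbound γ hγ, hev] with n h1 h2
    refine le_trans h1 (mul_le_mul_right ?_ _)
    refine le_trans ?_ hj.le
    exact le_iSup₂ (f := fun m (_ : m ≥ j) => b m / (m : ℝ≥0∞)) (N n) h2
  exact limsup_le_of_le (by isBoundedDefault) hfin

end ENNRealAux

section Core
variable {X : Type*} [MetricSpace X] [CompactSpace X]
  (act : X → ℝ → X)

/-- Direction 2 core: widim of the ℝ-ball w.r.t. an interval metric is at most
widim of the TZ-ball w.r.t. a covering grid metric. -/
lemma core_R_le_Z (h0 : ∀ x, act x 0 = x)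
    (hadd : ∀ x s t, act (act x s) t = act x (s + t))
    (hcont : Continuous fun q : X × ℝ => act q.1 q.2)
    {T : ℝ} (hT : 0 < T) (p : X) {r ε δ : ℝ} (hr : 0 < r) (hε : 0 < ε) (hδ : 0 < δ)
    (hmodδ : ∀ x y : X, dist x y ≤ δ → ∀ u ∈ Set.Icc (0:ℝ) T, dist (act x u) (act y u) ≤ ε)
    (n : ℕ) (s : ℝ) :
    widim {x : X | ∀ t : ℝ, dist (act x t) (act p t) ≤ r}
        (fun u v => dOmega dist act (Set.Icc s (s + (n : ℝ))) (u : X) (v : X)) ε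
      ≤ widim {x : X | ∀ j : ℤ, dist (act x ((j : ℝ) * T)) (act p ((j : ℝ) * T)) ≤ r}
        (fun u v => dOmega dist act
          {t : ℝ | ∃ m : ℕ, m < (⌈(n : ℝ) / T⌉₊ + 1) ∧
            t = ((⌊s / T⌋ : ℤ) : ℝ) * T + (m : ℝ) * T} (u : X) (v : X)) δ := by
  set k : ℤ := ⌊s / T⌋ with hk
  set N : ℕ := ⌈(n : ℝ) / T⌉₊ + 1 with hN
  set G : Set ℝ := {t : ℝ | ∃ m : ℕ, m < N ∧ t = (k : ℝ) * T + (m : ℝ) * T} with hG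
  set BR : Set X := {x : X | ∀ t : ℝ, dist (act x t) (act p t) ≤ r} with hBR
  set BZ : Set X := {x : X | ∀ j : ℤ, dist (act x ((j : ℝ) * T)) (act p ((j : ℝ) * T)) ≤ r}
    with hBZ
  have hsub : BR ⊆ BZ := fun x hx j => hx _
  -- grid is contained in the interval [kT, kT + N*T]
  have hGI : G ⊆ Set.Icc ((k : ℝ) * T) ((k : ℝ) * T + (N : ℝ) * T) := by
    rintro t ⟨m, hm, rfl⟩
    constructor
    · nlinarith [mul_nonneg (Nat.cast_nonneg m : (0:ℝ) ≤ (m:ℝ)) hT.le]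
    · have : (m : ℝ) ≤ (N : ℝ) := by exact_mod_cast hm.le
      nlinarith
  -- key metric comparison
  have key : ∀ x y : X, dOmega dist act G x y ≤ δ →
      dOmega dist act (Set.Icc s (s + (n : ℝ))) x y ≤ ε := by
    intro x y hd
    apply dOmega_le_of act hε.le
    intro t ht
    set j : ℤ := ⌊t / T⌋ with hj
    have hkj : k ≤ j := Int.floor_le_floor (by gcongr; exact ht.1)
    have hjlt : j < k + (⌈(n : ℝ) / T⌉₊ : ℤ) + 1 := by
      have h1 : (j : ℝ) ≤ t / T := Int.floor_le _
      have h2 : t / T ≤ s / T + (n : ℝ) / T := by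
        rw [← add_div]; gcongr; exact ht.2
      have h3 : s / T < (k : ℝ) + 1 := Int.lt_floor_add_one _
      have h4 : (n : ℝ) / T ≤ (⌈(n : ℝ) / T⌉₊ : ℝ) := Nat.le_ceil _
      have h5 : (j : ℝ) < (k : ℝ) + (⌈(n : ℝ) / T⌉₊ : ℝ) + 1 := by linarith
      exact_mod_cast h5
    have hmlt : (j - k).toNat < N := by
      rw [hN]
      omega
    have hmem : (j : ℝ) * T ∈ G := by
      refine ⟨(j - k).toNat, hmlt, ?_⟩
      have : (((j - k).toNat : ℤ) : ℝ) = (j : ℝ) - (k : ℝ) := by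
        rw [Int.toNat_of_nonneg (by omega)]; push_cast; ring
      push_cast at this ⊢
      rw [this]; ring
    have hdj : dist (act x ((j : ℝ) * T)) (act y ((j : ℝ) * T)) ≤ δ :=
      le_trans (le_dOmega act hmem x y) hd
    have hu0 : 0 ≤ t - (j : ℝ) * T := by
      have h1 : (j : ℝ) ≤ t / T := Int.floor_le _
      have h2 : (j : ℝ) * T ≤ t := (le_div_iff₀ hT).1 h1
      linarith
    have huT : t - (j : ℝ) * T ≤ T := by
      have h1 : t / T < (j : ℝ) + 1 := Int.lt_floor_add_one _
      have h2 : t < ((j : ℝ) + 1) * T := (div_lt_iff₀ hT).1 h1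
      nlinarith
    have := hmodδ _ _ hdj (t - (j : ℝ) * T) ⟨hu0, huT⟩
    rw [hadd, hadd] at this
    have harg : (j : ℝ) * T + (t - (j : ℝ) * T) = t := by ring
    rwa [harg] at this
  -- compactness and nonemptiness of BZ
  have hBZc : IsClosed BZ := by
    have : BZ = ⋂ j : ℤ, {x : X | dist (act x ((j : ℝ) * T)) (act p ((j : ℝ) * T)) ≤ r} := by
      ext x; simp [hBZ, Set.mem_iInter]
    rw [this]
    exact isClosed_iInter fun j => isClosed_le
      ((hcont.comp (continuous_id.prodMk continuous_const)).dist continuous_const)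
      continuous_const
  haveI : CompactSpace BZ := isCompact_iff_compactSpace.1 (hBZc.isCompact)
  haveI : Nonempty BZ := ⟨⟨p, fun j => by simp [hr.le]⟩⟩
  -- nonemptiness of the widim set on the BZ side
  have hne : (wset BZ (fun u v : BZ => dOmega dist act G (u : X) (v : X)) δ).Nonempty := by
    obtain ⟨η, hη, hmodη⟩ := flow_uc act hcont ((k : ℝ) * T) ((k : ℝ) * T + (N : ℝ) * T) hδ
    apply wset_nonempty _ hδ.le
    refine ⟨η, hη, fun u v huv => ?_⟩
    rw [Subtype.dist_eq] at huv
    exact dOmega_le_of act hδ.le fun γ hγ => hmodη _ _ huv γ (hGI hγ)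
  exact widim_mono hsub _ _ hε.le (diam (Set.univ : Set X))
    (fun x y => dOmega_le_diam act G x y) key hne

/-- Direction 1 core: widim of the TZ-ball w.r.t. a grid metric is at most
widim of the (smaller) ℝ-ball w.r.t. a longer interval metric. -/
lemma core_Z_le_R (h0 : ∀ x, act x 0 = x)
    (hadd : ∀ x s t, act (act x s) t = act x (s + t))
    (hcont : Continuous fun q : X × ℝ => act q.1 q.2)
    {T : ℝ} (hT : 0 < T) (p : X) {r r' ε : ℝ} (hr : 0 < r) (hr' : 0 < r') (hε : 0 < ε)
    (hsub : {x : X | ∀ j : ℤ, dist (act x ((j : ℝ) * T)) (act p ((j : ℝ) * T)) ≤ r}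
      ⊆ {x : X | ∀ t : ℝ, dist (act x t) (act p t) ≤ r'})
    (n : ℕ) (k : ℤ) :
    widim {x : X | ∀ j : ℤ, dist (act x ((j : ℝ) * T)) (act p ((j : ℝ) * T)) ≤ r}
        (fun u v => dOmega dist act
          {t : ℝ | ∃ m : ℕ, m < n ∧ t = (k : ℝ) * T + (m : ℝ) * T} (u : X) (v : X)) ε
      ≤ widim {x : X | ∀ t : ℝ, dist (act x t) (act p t) ≤ r'}
        (fun u v => dOmega dist act
          (Set.Icc ((k : ℝ) * T) ((k : ℝ) * T + (⌈(n : ℝ) * T⌉₊ : ℝ))) (u : X) (v : X)) ε := by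
  set G : Set ℝ := {t : ℝ | ∃ m : ℕ, m < n ∧ t = (k : ℝ) * T + (m : ℝ) * T} with hG
  set I : Set ℝ := Set.Icc ((k : ℝ) * T) ((k : ℝ) * T + (⌈(n : ℝ) * T⌉₊ : ℝ)) with hI
  set BR : Set X := {x : X | ∀ t : ℝ, dist (act x t) (act p t) ≤ r'} with hBR
  set BZ : Set X := {x : X | ∀ j : ℤ, dist (act x ((j : ℝ) * T)) (act p ((j : ℝ) * T)) ≤ r}
    with hBZ
  have hGI : G ⊆ I := by
    rintro t ⟨m, hm, rfl⟩
    constructor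
    · nlinarith [mul_nonneg (Nat.cast_nonneg m : (0:ℝ) ≤ (m:ℝ)) hT.le]
    · have h1 : (m : ℝ) * T ≤ (n : ℝ) * T := by
        have : (m : ℝ) ≤ (n : ℝ) := by exact_mod_cast hm.le
        nlinarith
      have h2 : (n : ℝ) * T ≤ (⌈(n : ℝ) * T⌉₊ : ℝ) := Nat.le_ceil _
      linarith
  have key : ∀ x y : X, dOmega dist act I x y ≤ ε → dOmega dist act G x y ≤ ε :=
    fun x y h => le_trans (dOmega_mono act hGI x y) h
  have hBRc : IsClosed BR := by
    have : BR = ⋂ t : ℝ, {x : X | dist (act x t) (act p t) ≤ r'} := by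
      ext x; simp [hBR, Set.mem_iInter]
    rw [this]
    exact isClosed_iInter fun t => isClosed_le
      ((hcont.comp (continuous_id.prodMk continuous_const)).dist continuous_const)
      continuous_const
  haveI : CompactSpace BR := isCompact_iff_compactSpace.1 (hBRc.isCompact)
  haveI : Nonempty BR := ⟨⟨p, fun t => by simp [hr'.le]⟩⟩
  have hne : (wset BR (fun u v : BR => dOmega dist act I (u : X) (v : X)) ε).Nonempty := by
    obtain ⟨η, hη, hmodη⟩ := flow_uc act hcont ((k : ℝ) * T)
      ((k : ℝ) * T + (⌈(n : ℝ) * T⌉₊ : ℝ)) hε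
    apply wset_nonempty _ hε.le
    refine ⟨η, hη, fun u v huv => ?_⟩
    rw [Subtype.dist_eq] at huv
    exact dOmega_le_of act hε.le fun γ hγ => hmodη _ _ huv γ hγ
  exact widim_mono hsub _ _ hε.le (diam (Set.univ : Set X))
    (fun x y => dOmega_le_diam act I x y) key hne

end Core

section Final

lemma ediv_trick (x : ℝ≥0∞) {nn NN : ℕ} (hn : 1 ≤ nn) (hN : 1 ≤ NN) {c : ℝ}
    (hc : (NN : ℝ) ≤ c * nn) : x / nn ≤ ENNReal.ofReal c * (x / NN) := by
  have hc0 : 0 < c := by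
    have h1 : (1 : ℝ) ≤ (NN : ℝ) := by exact_mod_cast hN
    have h2 : (0 : ℝ) < (nn : ℝ) := by exact_mod_cast hn
    nlinarith
  have hNne : (NN : ℝ≥0∞) ≠ 0 := by
    have : NN ≠ 0 := by omega
    exact_mod_cast this
  have hNtop : (NN : ℝ≥0∞) ≠ ⊤ := ENNReal.natCast_ne_top _
  have hnne : (nn : ℝ≥0∞) ≠ 0 := by
    have : nn ≠ 0 := by omega
    exact_mod_cast this
  have hntop : (nn : ℝ≥0∞) ≠ ⊤ := ENNReal.natCast_ne_top _
  have heq : x / nn = (x / NN) * ((NN : ℝ≥0∞) / nn) := by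
    rw [div_eq_mul_inv, div_eq_mul_inv, div_eq_mul_inv, mul_assoc]
    congr 1
    rw [← mul_assoc, ENNReal.inv_mul_cancel hNne hNtop, one_mul]
  rw [heq]
  refine mul_le_mul_right ?_ _ |>.trans_eq (mul_comm _ _)
  rw [ENNReal.div_le_iff hnne hntop]
  calc (NN : ℝ≥0∞) = ENNReal.ofReal (NN : ℝ) := by rw [ENNReal.ofReal_natCast]
    _ ≤ ENNReal.ofReal (c * nn) := ENNReal.ofReal_le_ofReal hc
    _ = ENNReal.ofReal c * (nn : ℝ≥0∞) := by
        rw [ENNReal.ofReal_mul hc0.le, ENNReal.ofReal_natCast]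

/-- For a continuous `ℝ`-action on a compact metric space and any point `p`,
`dim_p(X : Tℤ) = T · dim_p(X : ℝ)`. -/
theorem stmt6 {X : Type*} [MetricSpace X] [CompactSpace X]
    (act : X → ℝ → X) (h0 : ∀ x, act x 0 = x)
    (hadd : ∀ x s t, act (act x s) t = act x (s + t))
    (hcont : Continuous fun p : X × ℝ => act p.1 p.2)
    (T : ℝ) (hT : 0 < T) (p : X) :
    localDimTZ act T p = ENNReal.ofReal T * localDimR act p := by
  have hc0 : ENNReal.ofReal T ≠ 0 := by simp [hT]
  have hctop : ENNReal.ofReal T ≠ ⊤ := ENNReal.ofReal_ne_top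
  -- abbreviations
  set AR : ℝ → ℝ≥0∞ := fun r => ⨆ ε > (0 : ℝ), Filter.limsup
    (fun n : ℕ =>
      (⨆ s : ℝ, (widim {x : X | ∀ t : ℝ, dist (act x t) (act p t) ≤ r}
        (fun u v => dOmega dist act (Set.Icc s (s + (n : ℝ))) (u : X) (v : X)) ε : ℝ≥0∞))
      / (n : ℝ≥0∞)) Filter.atTop with hAR
  set AZ : ℝ → ℝ≥0∞ := fun r => ⨆ ε > (0 : ℝ), Filter.limsup
    (fun n : ℕ =>
      (⨆ k : ℤ, (widim {x : X | ∀ j : ℤ, dist (act x ((j : ℝ) * T)) (act p ((j : ℝ) * T)) ≤ r}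
        (fun u v => dOmega dist act
          {t : ℝ | ∃ m : ℕ, m < n ∧ t = (k : ℝ) * T + (m : ℝ) * T} (u : X) (v : X)) ε : ℝ≥0∞))
      / (n : ℝ≥0∞)) Filter.atTop with hAZ
  have hLR : localDimR act p = ⨅ r > (0 : ℝ), AR r := rfl
  have hLZ : localDimTZ act T p = ⨅ r > (0 : ℝ), AZ r := rfl
  -- direction 2 : T * R ≤ TZ
  have dir2 : ENNReal.ofReal T * localDimR act p ≤ localDimTZ act T p := by
    rw [hLZ]
    refine le_iInf fun r => le_iInf fun hr => ?_
    have h1 : localDimR act p ≤ AR r := by rw [hLR]; exact iInf₂_le r hr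
    refine le_trans (mul_le_mul_right h1 _) ?_
    rw [hAR]
    simp only
    rw [ENNReal.mul_iSup]
    refine iSup_le fun ε => ?_
    rw [ENNReal.mul_iSup]
    refine iSup_le fun hε => ?_
    obtain ⟨δ, hδ, hmodδ⟩ := flow_uc act hcont 0 T hε
    refine le_trans ?_ (le_iSup₂ (f := fun (δ' : ℝ) (_ : δ' > 0) => Filter.limsup
      (fun n : ℕ =>
        (⨆ k : ℤ, (widim {x : X | ∀ j : ℤ, dist (act x ((j : ℝ) * T)) (act p ((j : ℝ) * T)) ≤ r}
          (fun u v => dOmega dist act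
            {t : ℝ | ∃ m : ℕ, m < n ∧ t = (k : ℝ) * T + (m : ℝ) * T} (u : X) (v : X)) δ' : ℝ≥0∞))
        / (n : ℝ≥0∞)) Filter.atTop) δ hδ)
    -- core inequality via limsup_scale with c = T⁻¹
    have hN : Filter.Tendsto (fun n : ℕ => ⌈(n : ℝ) / T⌉₊ + 1) Filter.atTop Filter.atTop := by
      refine Filter.tendsto_atTop_atTop.2 fun b => ⟨⌈(b : ℝ) * T⌉₊, fun n hn => ?_⟩
      have h1 : ((b : ℝ) * T) ≤ (n : ℝ) := le_trans (Nat.le_ceil _) (by exact_mod_cast hn)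
      have h2 : (b : ℝ) ≤ (n : ℝ) / T := (le_div_iff₀ hT).2 h1
      have h3 : (b : ℝ) ≤ (⌈(n : ℝ) / T⌉₊ : ℝ) := le_trans h2 (Nat.le_ceil _)
      have h4 : b ≤ ⌈(n : ℝ) / T⌉₊ := by exact_mod_cast h3
      omega
    have hls := limsup_scale (a := fun n : ℕ =>
        ⨆ s : ℝ, (widim {x : X | ∀ t : ℝ, dist (act x t) (act p t) ≤ r}
          (fun u v => dOmega dist act (Set.Icc s (s + (n : ℝ))) (u : X) (v : X)) ε : ℝ≥0∞))
      (b := fun m : ℕ =>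
        ⨆ k : ℤ, (widim {x : X | ∀ j : ℤ, dist (act x ((j : ℝ) * T)) (act p ((j : ℝ) * T)) ≤ r}
          (fun u v => dOmega dist act
            {t : ℝ | ∃ m' : ℕ, m' < m ∧ t = (k : ℝ) * T + (m' : ℝ) * T} (u : X) (v : X)) δ : ℝ≥0∞))
      (inv_pos.2 hT) (fun n => ⌈(n : ℝ) / T⌉₊ + 1) hN ?hbound
    case hbound =>
      intro γ hγ
      rw [Filter.eventually_atTop]
      refine ⟨max 1 ⌈2 / γ⌉₊, fun n hn => ?_⟩
      have hn1 : 1 ≤ n := le_trans (le_max_left _ _) hn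
      have hn2 : (2 / γ : ℝ) ≤ (n : ℝ) :=
        le_trans (Nat.le_ceil _) (by exact_mod_cast le_trans (le_max_right _ _) hn)
      have hstep1 : (⨆ s : ℝ, (widim {x : X | ∀ t : ℝ, dist (act x t) (act p t) ≤ r}
          (fun u v => dOmega dist act (Set.Icc s (s + (n : ℝ))) (u : X) (v : X)) ε : ℝ≥0∞))
          ≤ ⨆ k : ℤ, (widim {x : X | ∀ j : ℤ, dist (act x ((j : ℝ) * T)) (act p ((j : ℝ) * T)) ≤ r}
          (fun u v => dOmega dist act
            {t : ℝ | ∃ m' : ℕ, m' < (⌈(n : ℝ) / T⌉₊ + 1) ∧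
              t = (k : ℝ) * T + (m' : ℝ) * T} (u : X) (v : X)) δ : ℝ≥0∞) := by
        refine iSup_le fun s => ?_
        refine le_trans ?_ (le_iSup _ ⌊s / T⌋)
        exact_mod_cast Nat.cast_le.2
          (core_R_le_Z act h0 hadd hcont hT p hr hε hδ hmodδ n s)
      have hNn1 : 1 ≤ ⌈(n : ℝ) / T⌉₊ + 1 := Nat.le_add_left 1 _
      have hcb : ((⌈(n : ℝ) / T⌉₊ + 1 : ℕ) : ℝ) ≤ (T⁻¹ + γ) * n := by
        have h1 : (⌈(n : ℝ) / T⌉₊ : ℝ) < (n : ℝ) / T + 1 :=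
          Nat.ceil_lt_add_one (by positivity)
        have h2 : (2 : ℝ) ≤ γ * n := by
          rw [div_le_iff₀ hγ] at hn2
          linarith [hn2]
        push_cast
        have h3 : (n : ℝ) / T = T⁻¹ * n := by field_simp
        nlinarith
      calc (⨆ s : ℝ, (widim {x : X | ∀ t : ℝ, dist (act x t) (act p t) ≤ r}
            (fun u v => dOmega dist act (Set.Icc s (s + (n : ℝ))) (u : X) (v : X)) ε : ℝ≥0∞))
            / (n : ℝ≥0∞)
          ≤ (⨆ k : ℤ, (widim {x : X | ∀ j : ℤ,
              dist (act x ((j : ℝ) * T)) (act p ((j : ℝ) * T)) ≤ r}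
            (fun u v => dOmega dist act
              {t : ℝ | ∃ m' : ℕ, m' < (⌈(n : ℝ) / T⌉₊ + 1) ∧
                t = (k : ℝ) * T + (m' : ℝ) * T} (u : X) (v : X)) δ : ℝ≥0∞)) / (n : ℝ≥0∞) :=
            ENNReal.div_le_div_right hstep1 _
        _ ≤ ENNReal.ofReal (T⁻¹ + γ) * ((⨆ k : ℤ, (widim {x : X | ∀ j : ℤ,
              dist (act x ((j : ℝ) * T)) (act p ((j : ℝ) * T)) ≤ r}
            (fun u v => dOmega dist act
              {t : ℝ | ∃ m' : ℕ, m' < (⌈(n : ℝ) / T⌉₊ + 1) ∧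
                t = (k : ℝ) * T + (m' : ℝ) * T} (u : X) (v : X)) δ : ℝ≥0∞))
            / ((⌈(n : ℝ) / T⌉₊ + 1 : ℕ) : ℝ≥0∞)) := ediv_trick _ hn1 hNn1 hcb
        _ = _ := by norm_cast
    calc ENNReal.ofReal T * Filter.limsup (fun n : ℕ =>
          (⨆ s : ℝ, (widim {x : X | ∀ t : ℝ, dist (act x t) (act p t) ≤ r}
            (fun u v => dOmega dist act (Set.Icc s (s + (n : ℝ))) (u : X) (v : X)) ε : ℝ≥0∞))
          / (n : ℝ≥0∞)) Filter.atTop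
        ≤ ENNReal.ofReal T * (ENNReal.ofReal T⁻¹ * Filter.limsup (fun m : ℕ =>
          (⨆ k : ℤ, (widim {x : X | ∀ j : ℤ,
              dist (act x ((j : ℝ) * T)) (act p ((j : ℝ) * T)) ≤ r}
            (fun u v => dOmega dist act
              {t : ℝ | ∃ m' : ℕ, m' < m ∧ t = (k : ℝ) * T + (m' : ℝ) * T} (u : X) (v : X))
              δ : ℝ≥0∞)) / (m : ℝ≥0∞)) Filter.atTop) := mul_le_mul_right hls _
      _ = _ := by
          rw [← mul_assoc, ← ENNReal.ofReal_mul hT.le, mul_inv_cancel₀ hT.ne',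
            ENNReal.ofReal_one, one_mul]
  -- direction 1 : TZ ≤ T * R
  have dir1 : localDimTZ act T p ≤ ENNReal.ofReal T * localDimR act p := by
    have main : ∀ r' : ℝ, 0 < r' → localDimTZ act T p ≤ ENNReal.ofReal T * AR r' := by
      intro r' hr'
      obtain ⟨δ₀, hδ₀, hmod⟩ := flow_uc act hcont 0 T hr'
      have hsub : {x : X | ∀ j : ℤ, dist (act x ((j : ℝ) * T)) (act p ((j : ℝ) * T)) ≤ δ₀}
          ⊆ {x : X | ∀ t : ℝ, dist (act x t) (act p t) ≤ r'} := by
        intro x hx t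
        set j : ℤ := ⌊t / T⌋ with hj
        have hu0 : 0 ≤ t - (j : ℝ) * T := by
          have h1 : (j : ℝ) ≤ t / T := Int.floor_le _
          have h2 : (j : ℝ) * T ≤ t := (le_div_iff₀ hT).1 h1
          linarith
        have huT : t - (j : ℝ) * T ≤ T := by
          have h1 : t / T < (j : ℝ) + 1 := Int.lt_floor_add_one _
          have h2 : t < ((j : ℝ) + 1) * T := (div_lt_iff₀ hT).1 h1
          nlinarith
        have := hmod _ _ (hx j) (t - (j : ℝ) * T) ⟨hu0, huT⟩
        rw [hadd, hadd] at this
        have harg : (j : ℝ) * T + (t - (j : ℝ) * T) = t := by ring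
        rwa [harg] at this
      have h1 : localDimTZ act T p ≤ AZ δ₀ := by rw [hLZ]; exact iInf₂_le δ₀ hδ₀
      refine le_trans h1 ?_
      rw [hAZ]
      simp only
      refine iSup_le fun ε => iSup_le fun hε => ?_
      -- core: limsupZ(δ₀, ε) ≤ ofReal T * limsupR(r', ε) ≤ ofReal T * AR r'
      have hN : Filter.Tendsto (fun n : ℕ => ⌈(n : ℝ) * T⌉₊) Filter.atTop Filter.atTop := by
        refine Filter.tendsto_atTop_atTop.2 fun b => ⟨⌈(b : ℝ) / T⌉₊ + 1, fun n hn => ?_⟩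
        have h1 : ((b : ℝ) / T) ≤ (n : ℝ) := by
          calc ((b : ℝ) / T) ≤ (⌈(b : ℝ) / T⌉₊ : ℝ) := Nat.le_ceil _
            _ ≤ (n : ℝ) := by exact_mod_cast Nat.le_of_succ_le hn
        have h2 : (b : ℝ) ≤ (n : ℝ) * T := by
          rw [div_le_iff₀ hT] at h1; linarith
        have h3 : (b : ℝ) ≤ (⌈(n : ℝ) * T⌉₊ : ℝ) := le_trans h2 (Nat.le_ceil _)
        exact_mod_cast h3
      have hls := limsup_scale (a := fun n : ℕ =>
          ⨆ k : ℤ, (widim {x : X | ∀ j : ℤ,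
              dist (act x ((j : ℝ) * T)) (act p ((j : ℝ) * T)) ≤ δ₀}
            (fun u v => dOmega dist act
              {t : ℝ | ∃ m : ℕ, m < n ∧ t = (k : ℝ) * T + (m : ℝ) * T} (u : X) (v : X))
              ε : ℝ≥0∞))
        (b := fun m : ℕ =>
          ⨆ s : ℝ, (widim {x : X | ∀ t : ℝ, dist (act x t) (act p t) ≤ r'}
            (fun u v => dOmega dist act (Set.Icc s (s + (m : ℝ))) (u : X) (v : X)) ε : ℝ≥0∞))
        hT (fun n => ⌈(n : ℝ) * T⌉₊) hN ?hbound1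
      case hbound1 =>
        intro γ hγ
        rw [Filter.eventually_atTop]
        refine ⟨max 1 ⌈1 / γ⌉₊, fun n hn => ?_⟩
        have hn1 : 1 ≤ n := le_trans (le_max_left _ _) hn
        have hn2 : (1 / γ : ℝ) ≤ (n : ℝ) :=
          le_trans (Nat.le_ceil _) (by exact_mod_cast le_trans (le_max_right _ _) hn)
        have hstep1 : (⨆ k : ℤ, (widim {x : X | ∀ j : ℤ,
              dist (act x ((j : ℝ) * T)) (act p ((j : ℝ) * T)) ≤ δ₀}
            (fun u v => dOmega dist act
              {t : ℝ | ∃ m : ℕ, m < n ∧ t = (k : ℝ) * T + (m : ℝ) * T} (u : X) (v : X))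
              ε : ℝ≥0∞))
            ≤ ⨆ s : ℝ, (widim {x : X | ∀ t : ℝ, dist (act x t) (act p t) ≤ r'}
              (fun u v => dOmega dist act
                (Set.Icc s (s + ((⌈(n : ℝ) * T⌉₊ : ℕ) : ℝ))) (u : X) (v : X)) ε : ℝ≥0∞) := by
          refine iSup_le fun k => ?_
          refine le_trans ?_ (le_iSup _ ((k : ℝ) * T))
          exact_mod_cast Nat.cast_le.2
            (core_Z_le_R act h0 hadd hcont hT p hδ₀ hr' hε hsub n k)
        have hNn1 : 1 ≤ ⌈(n : ℝ) * T⌉₊ := by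
          rw [Nat.one_le_iff_ne_zero, ← Nat.pos_iff_ne_zero]
          rw [Nat.ceil_pos]
          have : (1 : ℝ) ≤ (n : ℝ) := by exact_mod_cast hn1
          nlinarith
        have hcb : ((⌈(n : ℝ) * T⌉₊ : ℕ) : ℝ) ≤ (T + γ) * n := by
          have h1 : (⌈(n : ℝ) * T⌉₊ : ℝ) < (n : ℝ) * T + 1 :=
            Nat.ceil_lt_add_one (by positivity)
          have h2 : (1 : ℝ) ≤ γ * n := by
            rw [div_le_iff₀ hγ] at hn2
            linarith [hn2]
          nlinarith
        calc _ ≤ (⨆ s : ℝ, (widim {x : X | ∀ t : ℝ, dist (act x t) (act p t) ≤ r'}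
              (fun u v => dOmega dist act
                (Set.Icc s (s + ((⌈(n : ℝ) * T⌉₊ : ℕ) : ℝ))) (u : X) (v : X)) ε : ℝ≥0∞))
              / (n : ℝ≥0∞) := ENNReal.div_le_div_right hstep1 _
          _ ≤ ENNReal.ofReal (T + γ) * ((⨆ s : ℝ,
              (widim {x : X | ∀ t : ℝ, dist (act x t) (act p t) ≤ r'}
              (fun u v => dOmega dist act
                (Set.Icc s (s + ((⌈(n : ℝ) * T⌉₊ : ℕ) : ℝ))) (u : X) (v : X)) ε : ℝ≥0∞))
              / ((⌈(n : ℝ) * T⌉₊ : ℕ) : ℝ≥0∞)) := ediv_trick _ hn1 hNn1 hcb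
          _ = _ := by norm_cast
      refine le_trans hls (mul_le_mul_right ?_ _)
      exact le_iSup₂ (f := fun (ε' : ℝ) (_ : ε' > 0) => Filter.limsup
        (fun m : ℕ =>
          (⨆ s : ℝ, (widim {x : X | ∀ t : ℝ, dist (act x t) (act p t) ≤ r'}
            (fun u v => dOmega dist act (Set.Icc s (s + (m : ℝ))) (u : X) (v : X)) ε' : ℝ≥0∞))
          / (m : ℝ≥0∞)) Filter.atTop) ε hε
    -- conclude using the c⁻¹ trick
    have h2 : localDimTZ act T p ≤ ⨅ r' > (0 : ℝ), ENNReal.ofReal T * AR r' :=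
      le_iInf fun r' => le_iInf fun hr' => main r' hr'
    have h3 : (ENNReal.ofReal T)⁻¹ * (⨅ r' > (0 : ℝ), ENNReal.ofReal T * AR r')
        ≤ ⨅ r' > (0 : ℝ), AR r' := by
      refine le_iInf fun r' => le_iInf fun hr' => ?_
      refine le_trans (mul_le_mul_right (iInf₂_le r' hr') _) ?_
      rw [← mul_assoc, ENNReal.inv_mul_cancel hc0 hctop, one_mul]
    have h4 : (⨅ r' > (0 : ℝ), ENNReal.ofReal T * AR r')
        ≤ ENNReal.ofReal T * ⨅ r' > (0 : ℝ), AR r' := by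
      have h5 : (⨅ r' > (0 : ℝ), ENNReal.ofReal T * AR r')
          = ENNReal.ofReal T * ((ENNReal.ofReal T)⁻¹
            * ⨅ r' > (0 : ℝ), ENNReal.ofReal T * AR r') := by
        rw [← mul_assoc, ENNReal.mul_inv_cancel hc0 hctop, one_mul]
      rw [h5]
      exact mul_le_mul_right h3 _
    exact le_trans h2 (le_trans h4 (by rw [hLR]))
  exact le_antisymm dir1 dir2

end Final
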